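/- Let C be a monoidal category that is preadditive and whose tensor product is additive in each variable on morphisms. Let X, W, W̃ be objects together with morphisms ι : W ⟶ X, π : X ⟶ W, ι̃ : W̃ ⟶ X, π̃ : X ⟶ W̃ exhibiting X as a biproduct of W and W̃, i.e., π ∘ ι = id_W, π̃ ∘ ι̃ = id_{W̃}, π̃ ∘ ι = 0, π ∘ ι̃ = 0, and ι ∘ π + ι̃ ∘ π̃ = id_X. Suppose (e_X, i_X) is a self-duality datum for X, (e_{W̃}, i_{W̃}) is a self-duality datum for W̃, and every morphism from W to W̃ is zero. Then e_W := e_X ∘ (ι ⊗ ι) and i_W := (π ⊗ π) ∘ i_X form a self-duality datum for W; in particular, W is rigid and self-dual. -/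

import Mathlib

open CategoryTheory MonoidalCategory

set_option maxHeartbeats 1600000 in
/-- **Lemma 4.3.** If `X = W ⊕ W̃` in a preadditive monoidal category, `X` and `W̃` are
rigid and self-dual, and `Hom(W, W̃) = 0`, then `e_W := e_X ∘ (ι ⊗ ι)` and
`i_W := (π ⊗ π) ∘ i_X` form a self-duality datum for `W`; in particular `W` is rigid and
self-dual. -/
theorem direct_summand_self_dual {C : Type*} [Category C] [MonoidalCategory C]
    [Preadditive C] [MonoidalPreadditive C]
    (X W Wt : C)
    (ι : W ⟶ X) (π : X ⟶ W) (ιt : Wt ⟶ X) (πt : X ⟶ Wt)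
    (hπι : ι ≫ π = 𝟙 W) (hπtιt : ιt ≫ πt = 𝟙 Wt)
    (hιπt : ι ≫ πt = 0) (hιtπ : ιt ≫ π = 0)
    (hsum : π ≫ ι + πt ≫ ιt = 𝟙 X)
    (eX : X ⊗ X ⟶ 𝟙_ C) (iX : 𝟙_ C ⟶ X ⊗ X)
    (hX1 : (λ_ X).inv ≫ (iX ⊗ₘ 𝟙 X) ≫ (α_ X X X).hom ≫ (𝟙 X ⊗ₘ eX) ≫ (ρ_ X).hom = 𝟙 X)
    (hX2 : (ρ_ X).inv ≫ (𝟙 X ⊗ₘ iX) ≫ (α_ X X X).inv ≫ (eX ⊗ₘ 𝟙 X) ≫ (λ_ X).hom = 𝟙 X)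
    (eWt : Wt ⊗ Wt ⟶ 𝟙_ C) (iWt : 𝟙_ C ⟶ Wt ⊗ Wt)
    (hWt1 : (λ_ Wt).inv ≫ (iWt ⊗ₘ 𝟙 Wt) ≫ (α_ Wt Wt Wt).hom ≫ (𝟙 Wt ⊗ₘ eWt) ≫ (ρ_ Wt).hom = 𝟙 Wt)
    (hWt2 : (ρ_ Wt).inv ≫ (𝟙 Wt ⊗ₘ iWt) ≫ (α_ Wt Wt Wt).inv ≫ (eWt ⊗ₘ 𝟙 Wt) ≫ (λ_ Wt).hom = 𝟙 Wt)
    (hzero : ∀ f : W ⟶ Wt, f = 0) :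
    ((λ_ W).inv ≫ ((iX ≫ (π ⊗ₘ π)) ⊗ₘ 𝟙 W) ≫ (α_ W W W).hom ≫
        (𝟙 W ⊗ₘ ((ι ⊗ₘ ι) ≫ eX)) ≫ (ρ_ W).hom = 𝟙 W) ∧
    ((ρ_ W).inv ≫ (𝟙 W ⊗ₘ (iX ≫ (π ⊗ₘ π))) ≫ (α_ W W W).inv ≫
        (((ι ⊗ₘ ι) ≫ eX) ⊗ₘ 𝟙 W) ≫ (λ_ W).hom = 𝟙 W) := by
  -- an exact pairing on `Wt`
  have h2' : (𝟙 Wt ⊗ₘ iWt) ≫ (α_ Wt Wt Wt).inv ≫ (eWt ⊗ₘ 𝟙 Wt) = (ρ_ Wt).hom ≫ (λ_ Wt).inv := by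
    rw [← cancel_epi (ρ_ Wt).inv, ← cancel_mono (λ_ Wt).hom]
    simpa using hWt2
  have h1' : (iWt ⊗ₘ 𝟙 Wt) ≫ (α_ Wt Wt Wt).hom ≫ (𝟙 Wt ⊗ₘ eWt) = (λ_ Wt).hom ≫ (ρ_ Wt).inv := by
    rw [← cancel_epi (λ_ Wt).inv, ← cancel_mono (ρ_ Wt).hom]
    simpa using hWt1
  have hcross : ((ιt ⊗ₘ ι) ≫ eX = 0) ∧ ((ι ⊗ₘ ιt) ≫ eX = 0) := by
    letI EP : ExactPairing Wt Wt :=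
      { coevaluation' := iWt
        evaluation' := eWt
        coevaluation_evaluation' := by
          simpa [id_tensorHom, tensorHom_id] using h2'
        evaluation_coevaluation' := by
          simpa [id_tensorHom, tensorHom_id] using h1' }
    have hz1 : ∀ f : W ⟶ Wt ⊗ 𝟙_ C, f = 0 := by
      intro f
      have h0 := hzero (f ≫ (ρ_ Wt).hom)
      calc f = (f ≫ (ρ_ Wt).hom) ≫ (ρ_ Wt).inv := by simp
      _ = 0 := by rw [h0]; simp
    have hz2 : ∀ f : W ⟶ 𝟙_ C ⊗ Wt, f = 0 := by
      intro f
      have h0 := hzero (f ≫ (λ_ Wt).hom)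
      calc f = (f ≫ (λ_ Wt).hom) ≫ (λ_ Wt).inv := by simp
      _ = 0 := by rw [h0]; simp
    constructor
    · have h0 := hz1 ((tensorLeftHomEquiv W Wt Wt (𝟙_ C)) ((ιt ⊗ₘ ι) ≫ eX))
      have h1 := congrArg (tensorLeftHomEquiv W Wt Wt (𝟙_ C)).symm h0
      rw [Equiv.symm_apply_apply] at h1
      simpa [tensorLeftHomEquiv] using h1
    · have h0 := hz2 ((tensorRightHomEquiv W Wt Wt (𝟙_ C)) ((ι ⊗ₘ ιt) ≫ eX))
      have h1 := congrArg (tensorRightHomEquiv W Wt Wt (𝟙_ C)).symm h0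
      rw [Equiv.symm_apply_apply] at h1
      simpa [tensorRightHomEquiv] using h1
  obtain ⟨hcross1, hcross2⟩ := hcross
  have key1 : ((π ≫ ι) ⊗ₘ ι) ≫ eX = (𝟙 X ⊗ₘ ι) ≫ eX := by
    have hc : ((πt ≫ ιt) ⊗ₘ ι) ≫ eX = 0 := by
      have e1 : (πt ≫ ιt) ⊗ₘ ι = (πt ⊗ₘ 𝟙 W) ≫ (ιt ⊗ₘ ι) := by
        rw [tensorHom_comp_tensorHom, Category.id_comp]
      rw [e1, Category.assoc, hcross1]
      simp
    have hsplit : ((π ≫ ι + πt ≫ ιt) ⊗ₘ ι) ≫ eX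
        = ((π ≫ ι) ⊗ₘ ι) ≫ eX + ((πt ≫ ιt) ⊗ₘ ι) ≫ eX := by
      rw [MonoidalPreadditive.add_tensor, Preadditive.add_comp]
    rw [hsum, hc, add_zero] at hsplit
    exact hsplit.symm
  have key2 : (ι ⊗ₘ (π ≫ ι)) ≫ eX = (ι ⊗ₘ 𝟙 X) ≫ eX := by
    have hc : (ι ⊗ₘ (πt ≫ ιt)) ≫ eX = 0 := by
      have e1 : ι ⊗ₘ (πt ≫ ιt) = (𝟙 W ⊗ₘ πt) ≫ (ι ⊗ₘ ιt) := by
        rw [tensorHom_comp_tensorHom, Category.id_comp]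
      rw [e1, Category.assoc, hcross2]
      simp
    have hsplit : (ι ⊗ₘ (π ≫ ι + πt ≫ ιt)) ≫ eX
        = (ι ⊗ₘ (π ≫ ι)) ≫ eX + (ι ⊗ₘ (πt ≫ ιt)) ≫ eX := by
      rw [MonoidalPreadditive.tensor_add, Preadditive.add_comp]
    rw [hsum, hc, add_zero] at hsplit
    exact hsplit.symm
  constructor
  · calc (λ_ W).inv ≫ ((iX ≫ (π ⊗ₘ π)) ⊗ₘ 𝟙 W) ≫ (α_ W W W).hom ≫
        (𝟙 W ⊗ₘ ((ι ⊗ₘ ι) ≫ eX)) ≫ (ρ_ W).hom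
      = (λ_ W).inv ≫ (iX ⊗ₘ 𝟙 W) ≫ ((π ⊗ₘ π) ⊗ₘ 𝟙 W) ≫ (α_ W W W).hom ≫
        (𝟙 W ⊗ₘ ((ι ⊗ₘ ι) ≫ eX)) ≫ (ρ_ W).hom := by
          rw [comp_tensor_id]; simp only [Category.assoc]
    _ = (λ_ W).inv ≫ (iX ⊗ₘ 𝟙 W) ≫ (α_ X X W).hom ≫ (π ⊗ₘ (π ⊗ₘ 𝟙 W)) ≫
        (𝟙 W ⊗ₘ ((ι ⊗ₘ ι) ≫ eX)) ≫ (ρ_ W).hom := by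
          rw [associator_naturality_assoc]
    _ = (λ_ W).inv ≫ (iX ⊗ₘ 𝟙 W) ≫ (α_ X X W).hom ≫
        (π ⊗ₘ (((π ≫ ι) ⊗ₘ ι) ≫ eX)) ≫ (ρ_ W).hom := by
          rw [tensorHom_comp_tensorHom_assoc, Category.comp_id, tensorHom_comp_tensorHom_assoc, Category.id_comp]
    _ = (λ_ W).inv ≫ (iX ⊗ₘ 𝟙 W) ≫ (α_ X X W).hom ≫
        (π ⊗ₘ ((𝟙 X ⊗ₘ ι) ≫ eX)) ≫ (ρ_ W).hom := by rw [key1]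
    _ = ι ≫ ((λ_ X).inv ≫ (iX ⊗ₘ 𝟙 X) ≫ (α_ X X X).hom ≫ (𝟙 X ⊗ₘ eX) ≫ (ρ_ X).hom) ≫ π := by
          rw [show π ⊗ₘ ((𝟙 X ⊗ₘ ι) ≫ eX)
              = (𝟙 X ⊗ₘ ((𝟙 X ⊗ₘ ι) ≫ eX)) ≫ (π ⊗ₘ 𝟙 (𝟙_ C)) from by
            rw [tensorHom_comp_tensorHom, Category.id_comp, Category.comp_id]]
          rw [id_tensor_comp]
          simp only [Category.assoc]
          rw [← associator_naturality_assoc, id_tensorHom_id]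
          rw [tensor_id_comp_id_tensor_assoc, ← id_tensor_comp_tensor_id_assoc]
          simp only [Category.assoc, tensorHom_id, id_tensorHom]
          rw [rightUnitor_naturality]
          rw [← leftUnitor_inv_naturality_assoc]
    _ = 𝟙 W := by
          rw [hX1]
          simp [hπι]
  · calc (ρ_ W).inv ≫ (𝟙 W ⊗ₘ (iX ≫ (π ⊗ₘ π))) ≫ (α_ W W W).inv ≫
        (((ι ⊗ₘ ι) ≫ eX) ⊗ₘ 𝟙 W) ≫ (λ_ W).hom
      = (ρ_ W).inv ≫ (𝟙 W ⊗ₘ iX) ≫ (𝟙 W ⊗ₘ (π ⊗ₘ π)) ≫ (α_ W W W).inv ≫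
        (((ι ⊗ₘ ι) ≫ eX) ⊗ₘ 𝟙 W) ≫ (λ_ W).hom := by
          rw [id_tensor_comp]; simp only [Category.assoc]
    _ = (ρ_ W).inv ≫ (𝟙 W ⊗ₘ iX) ≫ (α_ W X X).inv ≫ ((𝟙 W ⊗ₘ π) ⊗ₘ π) ≫
        (((ι ⊗ₘ ι) ≫ eX) ⊗ₘ 𝟙 W) ≫ (λ_ W).hom := by
          rw [associator_inv_naturality_assoc]
    _ = (ρ_ W).inv ≫ (𝟙 W ⊗ₘ iX) ≫ (α_ W X X).inv ≫
        (((ι ⊗ₘ (π ≫ ι)) ≫ eX) ⊗ₘ π) ≫ (λ_ W).hom := by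
          rw [tensorHom_comp_tensorHom_assoc, Category.comp_id, tensorHom_comp_tensorHom_assoc, Category.id_comp]
    _ = (ρ_ W).inv ≫ (𝟙 W ⊗ₘ iX) ≫ (α_ W X X).inv ≫
        (((ι ⊗ₘ 𝟙 X) ≫ eX) ⊗ₘ π) ≫ (λ_ W).hom := by rw [key2]
    _ = ι ≫ ((ρ_ X).inv ≫ (𝟙 X ⊗ₘ iX) ≫ (α_ X X X).inv ≫ (eX ⊗ₘ 𝟙 X) ≫ (λ_ X).hom) ≫ π := by
          rw [show ((ι ⊗ₘ 𝟙 X) ≫ eX) ⊗ₘ π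
              = (((ι ⊗ₘ 𝟙 X) ≫ eX) ⊗ₘ 𝟙 X) ≫ (𝟙 (𝟙_ C) ⊗ₘ π) from by
            rw [tensorHom_comp_tensorHom, Category.id_comp, Category.comp_id]]
          rw [comp_tensor_id]
          simp only [Category.assoc]
          rw [← associator_inv_naturality_assoc, id_tensorHom_id]
          rw [id_tensor_comp_tensor_id_assoc, ← tensor_id_comp_id_tensor_assoc]
          simp only [Category.assoc, tensorHom_id, id_tensorHom]
          rw [leftUnitor_naturality]
          rw [← rightUnitor_inv_naturality_assoc]
    _ = 𝟙 W := by
          rw [hX2]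
          simp [hπι]
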